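/- The function ψ(t) := δ_γ|t| − h_{q,γ}(t)^q is differentiable at every point of ℝ, and its derivative at t equals j(t) for every real t. -/

import Mathlib

/-- The Huber-like local smoothing `h_{q,γ}` of the absolute value, with
parameters `q ∈ (0,1)` and `γ > 0`.  Powers are real powers. -/
noncomputable def huber (q γ t : ℝ) : ℝ :=
  if |t| ≤ 1 / γ then q * γ ^ ((1 - q) / q) * |t| ^ (1 / q)
  else |t| - (1 - q) / γ

/-- The superposition function `j` from the first-order optimality system, with
`δ_γ = q^q γ^(1-q)`. -/
noncomputable def jfun (q γ t : ℝ) : ℝ :=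
  if 1 / γ < |t| then
    (q ^ q * γ ^ (1 - q) - q * (|t| + (q - 1) / γ) ^ (q - 1)) * Real.sign t
  else 0

private lemma huber_pow_inner (q γ : ℝ) (hq0 : 0 < q) (hγ : 0 < γ) {t : ℝ}
    (ht : |t| ≤ 1/γ) : (huber q γ t) ^ q = q ^ q * γ ^ (1 - q) * |t| := by
  rw [huber, if_pos ht,
      Real.mul_rpow (by positivity) (Real.rpow_nonneg (abs_nonneg t) _),
      Real.mul_rpow hq0.le (Real.rpow_nonneg hγ.le _),
      ← Real.rpow_mul hγ.le, ← Real.rpow_mul (abs_nonneg t),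
      div_mul_cancel₀ _ hq0.ne', one_div_mul_cancel hq0.ne', Real.rpow_one]

private lemma key2 (q γ : ℝ) (hq0 : 0 < q) (hγ : 0 < γ) :
    q * (q/γ) ^ (q-1) = q ^ q * γ ^ (1-q) := by
  rw [Real.div_rpow hq0.le hγ.le, div_eq_mul_inv, ← Real.rpow_neg hγ.le]
  have h1 : -(q-1) = 1-q := by ring
  rw [h1, ← mul_assoc]
  congr 1
  nth_rewrite 1 [← Real.rpow_one q]
  rw [← Real.rpow_add hq0]
  ring_nf

private lemma key1 (q γ : ℝ) (hq0 : 0 < q) (hγ : 0 < γ) :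
    (q/γ) ^ q = q ^ q * γ ^ (1-q) / γ := by
  rw [Real.div_rpow hq0.le hγ.le, div_eq_div_iff (by positivity) hγ.ne',
      mul_assoc, ← Real.rpow_add hγ]
  have h1 : 1 - q + q = 1 := by ring
  rw [h1, Real.rpow_one]

/-- The function `ψ(t) = δ_γ |t| − h_{q,γ}(t)^q` is differentiable at every point
of `ℝ` and its derivative at `t` equals `j(t)` for every real `t`. -/
theorem psi_hasDerivAt (q γ : ℝ) (hq0 : 0 < q) (hq1 : q < 1) (hγ : 0 < γ) :
    ∀ t : ℝ,
      HasDerivAt (fun s : ℝ => q ^ q * γ ^ (1 - q) * |s| - (huber q γ s) ^ q)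
        (jfun q γ t) t := by
  intro t
  have hγ' : (0:ℝ) < 1/γ := by positivity
  set δ : ℝ := q ^ q * γ ^ (1-q) with hδ
  set c : ℝ := (q-1)/γ with hc
  set ψ : ℝ → ℝ := fun s : ℝ => q ^ q * γ ^ (1 - q) * |s| - (huber q γ s) ^ q with hψ
  have hqc : 1/γ + c = q/γ := by rw [hc]; field_simp; ring
  -- derivative of the outer function
  have hderiv_g : ∀ x : ℝ, 0 < x + c →
      HasDerivAt (fun s : ℝ => δ * s - (s + c) ^ q) (δ - q * (x+c)^(q-1)) x := by
    intro x hx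
    have h1 : HasDerivAt (fun s : ℝ => s + c) 1 x := (hasDerivAt_id x).add_const c
    have h2 := h1.rpow_const (p := q) (Or.inl hx.ne')
    have h3 : HasDerivAt (fun s : ℝ => δ * s) δ x := by
      simpa using (hasDerivAt_id x).const_mul δ
    have := h3.sub h2
    rw [one_mul] at this
    exact this
  have hnegderiv : ∀ x : ℝ, 0 < -x + c →
      HasDerivAt (fun s : ℝ => δ * (-s) - (-s + c) ^ q)
        ((δ - q * (-x + c) ^ (q-1)) * (-1)) x := by
    intro x hx
    exact (hderiv_g (-x) hx).comp x (hasDerivAt_neg x)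
  -- ψ vanishes on the inner region
  have hzero : ∀ s : ℝ, |s| ≤ 1/γ → ψ s = 0 := by
    intro s hs
    simp only [hψ, huber_pow_inner q γ hq0 hγ hs, sub_self]
  -- ψ agrees with the outer function on [1/γ, ∞)
  have hpsig : ∀ s : ℝ, 1/γ ≤ s → ψ s = δ * s - (s + c) ^ q := by
    intro s hs
    have hspos : 0 < s := lt_of_lt_of_le hγ' hs
    have habs : |s| = s := abs_of_pos hspos
    rcases eq_or_lt_of_le hs with h | h
    · rw [hzero s (by rw [habs, ← h]), ← h, hqc, key1 q γ hq0 hγ]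
      field_simp
      rw [hδ]; ring
    · simp only [hψ, huber, habs, if_neg (not_le.2 h)]
      have : s - (1-q)/γ = s + c := by rw [hc]; ring
      rw [this]
  -- ψ agrees with the reflected outer function on (-∞, -1/γ]
  have hpsign : ∀ s : ℝ, s ≤ -(1/γ) → ψ s = δ * (-s) - (-s + c) ^ q := by
    intro s hs
    have hsneg : s < 0 := lt_of_le_of_lt hs (by linarith)
    have habs : |s| = -s := abs_of_neg hsneg
    have hs' : 1/γ ≤ -s := by linarith
    rcases eq_or_lt_of_le hs' with h | h
    · rw [hzero s (by rw [habs, ← h]), ← h, hqc, key1 q γ hq0 hγ]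
      field_simp
      rw [hδ]; ring
    · simp only [hψ, huber, habs, if_neg (not_le.2 h)]
      have : -s - (1-q)/γ = -s + c := by rw [hc]; ring
      rw [this]
  -- derivative vanishes at the boundary
  have hbd : δ - q * (1/γ + c)^(q-1) = 0 := by
    rw [hqc, key2 q γ hq0 hγ, hδ, sub_self]
  rcases lt_trichotomy |t| (1/γ) with h | h | h
  · -- interior
    have hev : ψ =ᶠ[nhds t] fun _ => 0 := by
      have : ∀ᶠ s in nhds t, |s| < 1/γ :=
        (continuous_abs.continuousAt).eventually_lt continuousAt_const h
      filter_upwards [this] with s hs using hzero s hs.le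
    have hj : jfun q γ t = 0 := by rw [jfun, if_neg (not_lt.2 h.le)]
    rw [hj]
    exact (hasDerivAt_const t 0).congr_of_eventuallyEq hev
  · -- boundary: t = 1/γ or t = -1/γ
    have hj : jfun q γ t = 0 := by rw [jfun, if_neg (not_lt.2 h.le)]
    rw [hj]
    rcases (abs_eq hγ'.le).1 h with rfl | rfl
    · -- t = 1/γ
      have left : HasDerivWithinAt ψ 0 (Set.Iic (1/γ)) (1/γ) := by
        apply (hasDerivWithinAt_const _ _ (0:ℝ)).congr_of_eventuallyEq
        · have h1 : ∀ᶠ s in nhdsWithin (1/γ) (Set.Iic (1/γ)), -(1/γ) < s :=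
            eventually_nhdsWithin_of_eventually_nhds (eventually_gt_nhds (by linarith))
          filter_upwards [h1, self_mem_nhdsWithin] with s hs1 hs2
          exact hzero s (abs_le.2 ⟨hs1.le, hs2⟩)
        · exact hzero _ (by rw [abs_of_pos hγ'])
      have right : HasDerivWithinAt ψ 0 (Set.Ici (1/γ)) (1/γ) := by
        have hpos : 0 < 1/γ + c := by rw [hqc]; positivity
        have := ((hderiv_g (1/γ) hpos).hasDerivWithinAt (s := Set.Ici (1/γ))).congr
          (fun y hy => hpsig y hy) (hpsig _ le_rfl)
        rwa [hbd] at this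
      have := left.union right
      rw [Set.Iic_union_Ici] at this
      exact this.hasDerivAt (by simp)
    · -- t = -1/γ
      have right : HasDerivWithinAt ψ 0 (Set.Ici (-(1/γ))) (-(1/γ)) := by
        apply (hasDerivWithinAt_const _ _ (0:ℝ)).congr_of_eventuallyEq
        · have h1 : ∀ᶠ s in nhdsWithin (-(1/γ)) (Set.Ici (-(1/γ))), s < 1/γ :=
            eventually_nhdsWithin_of_eventually_nhds (eventually_lt_nhds (by linarith))
          filter_upwards [h1, self_mem_nhdsWithin] with s hs1 hs2
          exact hzero s (abs_le.2 ⟨hs2, hs1.le⟩)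
        · exact hzero _ (by rw [abs_neg, abs_of_pos hγ'])
      have left : HasDerivWithinAt ψ 0 (Set.Iic (-(1/γ))) (-(1/γ)) := by
        have hpos : 0 < 1/γ + c := by rw [hqc]; positivity
        have hneg := hnegderiv (-(1/γ)) (by rw [neg_neg]; exact hpos)
        rw [neg_neg, hbd, zero_mul] at hneg
        exact (hneg.hasDerivWithinAt (s := Set.Iic (-(1/γ)))).congr
          (fun y hy => hpsign y hy) (hpsign _ le_rfl)
      have := left.union right
      rw [Set.Iic_union_Ici] at this
      exact this.hasDerivAt (by simp)
  · -- outer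
    have hj : jfun q γ t = (δ - q * (|t| + c) ^ (q-1)) * Real.sign t := by
      rw [jfun, if_pos h]
    rcases lt_or_gt_of_ne (fun h0 : t = 0 => by simp [h0] at h; linarith) with htn | htp
    · -- t < 0
      have habs : |t| = -t := abs_of_neg htn
      have hsign : Real.sign t = -1 := Real.sign_of_neg htn
      have hc' : -(1/γ) < c := by
        rw [hc, lt_div_iff₀ hγ]
        have he : -(1/γ) * γ = -1 := by field_simp
        rw [he]; linarith
      have hpos : 0 < -t + c := by
        have h1 : 1/γ < -t := by rwa [habs] at h
        linarith
      have hev : ψ =ᶠ[nhds t] fun s => δ * (-s) - (-s + c) ^ q := by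
        have : ∀ᶠ s in nhds t, s < -(1/γ) := eventually_lt_nhds (by rw [habs] at h; linarith)
        filter_upwards [this] with s hs using hpsign s hs.le
      have hneg := hnegderiv t hpos
      rw [hj, hsign, habs]
      exact hneg.congr_of_eventuallyEq hev
    · -- t > 0
      have habs : |t| = t := abs_of_pos htp
      have hsign : Real.sign t = 1 := Real.sign_of_pos htp
      have hpos : 0 < t + c := by
        have h1 : 1/γ < t := habs ▸ h
        have h2 : 0 < 1/γ + c := by rw [hqc]; positivity
        linarith
      have hev : ψ =ᶠ[nhds t] fun s => δ * s - (s + c) ^ q := by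
        have : ∀ᶠ s in nhds t, 1/γ < s := eventually_gt_nhds (habs ▸ h)
        filter_upwards [this] with s hs using hpsig s hs.le
      rw [hj, hsign, habs, mul_one]
      exact (hderiv_g t hpos).congr_of_eventuallyEq hev
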